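/- The map sending (i, s), where s is a (p,q)-shuffle and i ∈ s(⌐), to (i, α_i(s)), where α_i(s) is obtained from s by replacing s_k with s_k - 1 at the index k with i = s_k + k - 1, is a bijection from the disjoint union over shuffles s of s(⌐) × {s} to the disjoint union over shuffles s of s(¬) × {s}. -/

import Mathlib

def IsShuffle (p q : ℕ) (s : Fin (q + 2) → ℕ) : Prop :=
  s 0 = 0 ∧ s (Fin.last (q + 1)) = p ∧ ∀ i : Fin (q + 1), s i.castSucc ≤ s i.succ

/-- `s(⌐)`: `i = s_k + k - 1` with `s_{k-1} < s_k` for some `1 ≤ k ≤ q+1`. -/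
def sL (p q : ℕ) (s : Fin (q + 2) → ℕ) : Set ℕ :=
  {i | 0 < i ∧ i < p + q ∧
     ∃ k : Fin (q + 1), i = s k.succ + (k : ℕ) ∧ s k.castSucc < s k.succ}

/-- `s(¬)`: `i = s_k + k` with `s_k < s_{k+1}` for some `0 ≤ k ≤ q`. -/
def sN (p q : ℕ) (s : Fin (q + 2) → ℕ) : Set ℕ :=
  {i | 0 < i ∧ i < p + q ∧
     ∃ k : Fin (q + 1), i = s k.castSucc + (k : ℕ) ∧ s k.castSucc < s k.succ}

/-- The disjoint union over shuffles `s` of `s(⌐) × {s}`. -/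
def LSig (p q : ℕ) :=
  Σ s : {s : Fin (q + 2) → ℕ // IsShuffle p q s}, {i : ℕ // i ∈ sL p q s.1}

/-- The disjoint union over shuffles `s` of `s(¬) × {s}`. -/
def NSig (p q : ℕ) :=
  Σ s : {s : Fin (q + 2) → ℕ // IsShuffle p q s}, {i : ℕ // i ∈ sN p q s.1}

section Aux
variable {p q : ℕ}

lemma shuffle_mono {s : Fin (q + 2) → ℕ} (hs : IsShuffle p q s) {a b : Fin (q + 2)}
    (h : (a : ℕ) ≤ (b : ℕ)) : s a ≤ s b := by
  have hm : Monotone s := Fin.monotone_iff_le_succ.mpr hs.2.2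
  exact hm (Fin.le_def.mpr h)

lemma keyL {s : Fin (q + 2) → ℕ} {i : ℕ} {k : Fin (q + 1)} (hs : IsShuffle p q s)
    (h1 : i < p + q) (hke : i = s k.succ + (k : ℕ)) : (k : ℕ) < q := by
  by_contra h
  have hkq : (k : ℕ) = q := by have := k.isLt; omega
  have hkl : k.succ = Fin.last (q + 1) := by
    apply Fin.ext; simp [hkq, Fin.val_last]
  rw [hkl, hs.2.1] at hke
  omega

lemma keyN {t : Fin (q + 2) → ℕ} {i : ℕ} {l : Fin (q + 1)} (ht : IsShuffle p q t)
    (h0 : 0 < i) (hle : i = t l.castSucc + (l : ℕ)) : 0 < (l : ℕ) := by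
  by_contra h
  have hl0 : l.castSucc = 0 := by apply Fin.ext; show (l : ℕ) = ((0 : Fin (q + 2)) : ℕ); rw [Fin.val_zero]; omega
  rw [hl0, ht.1] at hle
  omega

lemma Fshuffle {s : Fin (q + 2) → ℕ} {i : ℕ} {k : Fin (q + 1)} (hs : IsShuffle p q s)
    (h1 : i < p + q) (hke : i = s k.succ + (k : ℕ)) (hkl : s k.castSucc < s k.succ) :
    IsShuffle p q (Function.update s k.succ (s k.succ - 1)) := by
  have hkq := keyL hs h1 hke
  refine ⟨?_, ?_, ?_⟩
  · rw [Function.update_of_ne (show (0 : Fin (q + 2)) ≠ k.succ from (Fin.succ_ne_zero k).symm)]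
    exact hs.1
  · rw [Function.update_of_ne (show Fin.last (q + 1) ≠ k.succ by simp [Fin.ext_iff, Fin.val_last]; omega)]
    exact hs.2.1
  · intro j
    have hm := hs.2.2 j
    rw [Function.update_apply, Function.update_apply]
    split_ifs with hA hB hB
    · exfalso; rw [Fin.ext_iff] at hA hB; simp at hA hB; omega
    · have : s k.succ ≤ s j.succ := by
        apply shuffle_mono hs
        rw [Fin.ext_iff] at hA; simp at hA ⊢; omega
      omega
    · have hj : j = k := by rw [Fin.ext_iff] at hB ⊢; simpa using hB
      subst hj; omega
    · exact hm

lemma Fmem_strong {s : Fin (q + 2) → ℕ} {i : ℕ} {k : Fin (q + 1)} (hs : IsShuffle p q s)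
    (h1 : i < p + q) (hke : i = s k.succ + (k : ℕ)) (hkl : s k.castSucc < s k.succ) :
    ∃ l : Fin (q + 1), (l : ℕ) = (k : ℕ) + 1 ∧
      i = Function.update s k.succ (s k.succ - 1) l.castSucc + (l : ℕ) ∧
      Function.update s k.succ (s k.succ - 1) l.castSucc <
        Function.update s k.succ (s k.succ - 1) l.succ := by
  have hkq := keyL hs h1 hke
  refine ⟨⟨(k : ℕ) + 1, by omega⟩, rfl, ?_, ?_⟩
  · rw [show ((⟨(k : ℕ) + 1, by omega⟩ : Fin (q + 1)).castSucc) = k.succ from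
      Fin.ext (by simp)]
    rw [Function.update_self]
    simp only []
    omega
  · rw [show ((⟨(k : ℕ) + 1, by omega⟩ : Fin (q + 1)).castSucc) = k.succ from
      Fin.ext (by simp)]
    rw [Function.update_self]
    rw [Function.update_of_ne (show (⟨(k : ℕ) + 1, by omega⟩ : Fin (q + 1)).succ ≠ k.succ by simp [Fin.ext_iff])]
    have : s k.succ ≤ s (⟨(k : ℕ) + 1, by omega⟩ : Fin (q + 1)).succ := by
      apply shuffle_mono hs; simp
    omega

lemma Gshuffle {t : Fin (q + 2) → ℕ} {i : ℕ} {l : Fin (q + 1)} (ht : IsShuffle p q t)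
    (h0 : 0 < i) (hle : i = t l.castSucc + (l : ℕ)) (hll : t l.castSucc < t l.succ) :
    IsShuffle p q (Function.update t l.castSucc (t l.castSucc + 1)) := by
  have hl0 := keyN ht h0 hle
  refine ⟨?_, ?_, ?_⟩
  · rw [Function.update_of_ne (show (0 : Fin (q + 2)) ≠ l.castSucc by simp [Fin.ext_iff]; omega)]
    exact ht.1
  · rw [Function.update_of_ne (show Fin.last (q + 1) ≠ l.castSucc by simp [Fin.ext_iff, Fin.val_last]; have := l.isLt; omega)]
    exact ht.2.1
  · intro j
    have hm := ht.2.2 j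
    rw [Function.update_apply, Function.update_apply]
    split_ifs with hA hB hB
    · exfalso; rw [Fin.ext_iff] at hA hB; simp at hA hB; omega
    · have hj : j = l := by rw [Fin.ext_iff] at hA ⊢; simpa using hA
      subst hj; omega
    · rw [← hB]; omega
    · exact hm

lemma Gmem_strong {t : Fin (q + 2) → ℕ} {i : ℕ} {l : Fin (q + 1)} (ht : IsShuffle p q t)
    (h0 : 0 < i) (hle : i = t l.castSucc + (l : ℕ)) (hll : t l.castSucc < t l.succ) :
    ∃ k : Fin (q + 1), (k : ℕ) + 1 = (l : ℕ) ∧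
      i = Function.update t l.castSucc (t l.castSucc + 1) k.succ + (k : ℕ) ∧
      Function.update t l.castSucc (t l.castSucc + 1) k.castSucc <
        Function.update t l.castSucc (t l.castSucc + 1) k.succ := by
  have hl0 := keyN ht h0 hle
  refine ⟨⟨(l : ℕ) - 1, by have := l.isLt; omega⟩, by show (l : ℕ) - 1 + 1 = (l : ℕ); omega, ?_, ?_⟩
  · rw [show ((⟨(l : ℕ) - 1, by have := l.isLt; omega⟩ : Fin (q + 1)).succ) = l.castSucc from
      Fin.ext (by simp; omega)]
    rw [Function.update_self]
    simp only []
    omega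
  · rw [show ((⟨(l : ℕ) - 1, by have := l.isLt; omega⟩ : Fin (q + 1)).succ) = l.castSucc from
      Fin.ext (by simp; omega)]
    rw [Function.update_self]
    rw [Function.update_of_ne (show (⟨(l : ℕ) - 1, by have := l.isLt; omega⟩ : Fin (q + 1)).castSucc ≠ l.castSucc by simp [Fin.ext_iff]; omega)]
    have : t (⟨(l : ℕ) - 1, by have := l.isLt; omega⟩ : Fin (q + 1)).castSucc ≤ t l.castSucc := by
      apply shuffle_mono ht; simp
    omega

lemma uniqL {s : Fin (q + 2) → ℕ} {i : ℕ} {k k' : Fin (q + 1)} (hs : IsShuffle p q s)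
    (hke : i = s k.succ + (k : ℕ)) (hke' : i = s k'.succ + (k' : ℕ)) : k = k' := by
  rcases lt_trichotomy (k : ℕ) (k' : ℕ) with h | h | h
  · exfalso
    have := shuffle_mono hs (a := k.succ) (b := k'.succ) (by simp; omega)
    omega
  · exact Fin.ext h
  · exfalso
    have := shuffle_mono hs (a := k'.succ) (b := k.succ) (by simp; omega)
    omega

lemma uniqN {t : Fin (q + 2) → ℕ} {i : ℕ} {l l' : Fin (q + 1)} (ht : IsShuffle p q t)
    (hle : i = t l.castSucc + (l : ℕ)) (hle' : i = t l'.castSucc + (l' : ℕ)) : l = l' := by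
  rcases lt_trichotomy (l : ℕ) (l' : ℕ) with h | h | h
  · exfalso
    have := shuffle_mono ht (a := l.castSucc) (b := l'.castSucc) (by simp; omega)
    omega
  · exact Fin.ext h
  · exfalso
    have := shuffle_mono ht (a := l'.castSucc) (b := l.castSucc) (by simp; omega)
    omega

lemma LSig_ext {x y : LSig p q} (h1 : x.1.1 = y.1.1) (h2 : (x.2 : ℕ) = (y.2 : ℕ)) : x = y := by
  obtain ⟨⟨s, hs⟩, i, hi⟩ := x
  obtain ⟨⟨s', hs'⟩, i', hi'⟩ := y
  dsimp at h1 h2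
  subst h1; subst h2
  rfl

lemma NSig_ext {x y : NSig p q} (h1 : x.1.1 = y.1.1) (h2 : (x.2 : ℕ) = (y.2 : ℕ)) : x = y := by
  obtain ⟨⟨s, hs⟩, i, hi⟩ := x
  obtain ⟨⟨s', hs'⟩, i', hi'⟩ := y
  dsimp at h1 h2
  subst h1; subst h2
  rfl

end Aux

noncomputable def Fmap (p q : ℕ) (x : LSig p q) : NSig p q :=
  ⟨⟨Function.update x.1.1 ((x.2.2.2.2).choose).succ (x.1.1 ((x.2.2.2.2).choose).succ - 1),
    Fshuffle x.1.2 x.2.2.2.1 (x.2.2.2.2).choose_spec.1 (x.2.2.2.2).choose_spec.2⟩,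
   x.2.1, ⟨x.2.2.1, x.2.2.2.1, by
     obtain ⟨l, _, h2, h3⟩ :=
       Fmem_strong x.1.2 x.2.2.2.1 (x.2.2.2.2).choose_spec.1 (x.2.2.2.2).choose_spec.2
     exact ⟨l, h2, h3⟩⟩⟩

noncomputable def Gmap (p q : ℕ) (y : NSig p q) : LSig p q :=
  ⟨⟨Function.update y.1.1 ((y.2.2.2.2).choose).castSucc
      (y.1.1 ((y.2.2.2.2).choose).castSucc + 1),
    Gshuffle y.1.2 y.2.2.1 (y.2.2.2.2).choose_spec.1 (y.2.2.2.2).choose_spec.2⟩,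
   y.2.1, ⟨y.2.2.1, y.2.2.2.1, by
     obtain ⟨k, _, h2, h3⟩ :=
       Gmem_strong y.1.2 y.2.2.1 (y.2.2.2.2).choose_spec.1 (y.2.2.2.2).choose_spec.2
     exact ⟨k, h2, h3⟩⟩⟩

lemma Fmap_spec {p q : ℕ} (x : LSig p q) :
    ∃ k : Fin (q + 1), ((x.2 : ℕ) = x.1.1 k.succ + (k : ℕ) ∧ x.1.1 k.castSucc < x.1.1 k.succ) ∧
      (Fmap p q x).1.1 = Function.update x.1.1 k.succ (x.1.1 k.succ - 1) ∧
      ((Fmap p q x).2 : ℕ) = (x.2 : ℕ) :=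
  ⟨(x.2.2.2.2).choose, (x.2.2.2.2).choose_spec, rfl, rfl⟩

lemma Gmap_spec {p q : ℕ} (y : NSig p q) :
    ∃ l : Fin (q + 1), ((y.2 : ℕ) = y.1.1 l.castSucc + (l : ℕ) ∧ y.1.1 l.castSucc < y.1.1 l.succ) ∧
      (Gmap p q y).1.1 = Function.update y.1.1 l.castSucc (y.1.1 l.castSucc + 1) ∧
      ((Gmap p q y).2 : ℕ) = (y.2 : ℕ) :=
  ⟨(y.2.2.2.2).choose, (y.2.2.2.2).choose_spec, rfl, rfl⟩

lemma GF {p q : ℕ} : ∀ x : LSig p q, Gmap p q (Fmap p q x) = x := by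
  intro x
  obtain ⟨k, ⟨hke, hkl⟩, hF1, hF2⟩ := Fmap_spec x
  obtain ⟨l, ⟨hle, hll⟩, hG1, hG2⟩ := Gmap_spec (Fmap p q x)
  have hs : IsShuffle p q x.1.1 := x.1.2
  have h0 : 0 < (x.2 : ℕ) := x.2.2.1
  have h1 : (x.2 : ℕ) < p + q := x.2.2.2.1
  have hle' : (x.2 : ℕ) =
      Function.update x.1.1 k.succ (x.1.1 k.succ - 1) l.castSucc + (l : ℕ) := by
    rw [← hF1, ← hF2]; exact hle
  obtain ⟨l0, hl0v, hl0e, hl0l⟩ := Fmem_strong hs h1 hke hkl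
  have htsh := Fshuffle hs h1 hke hkl
  have hll0 : l = l0 := uniqN htsh hle' hl0e
  subst hll0
  apply LSig_ext
  · rw [hG1, hF1]
    have hcs : l.castSucc = k.succ := Fin.ext (by simp [hl0v])
    rw [hcs]
    have hv : Function.update x.1.1 k.succ (x.1.1 k.succ - 1) k.succ = x.1.1 k.succ - 1 :=
      Function.update_self _ _ _
    rw [hv]
    have h2 : x.1.1 k.succ - 1 + 1 = x.1.1 k.succ := by omega
    rw [h2, Function.update_idem, Function.update_eq_self]
  · rw [hG2, hF2]

lemma FG {p q : ℕ} : ∀ y : NSig p q, Fmap p q (Gmap p q y) = y := by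
  intro y
  obtain ⟨l, ⟨hle, hll⟩, hG1, hG2⟩ := Gmap_spec y
  obtain ⟨k, ⟨hke, hkl⟩, hF1, hF2⟩ := Fmap_spec (Gmap p q y)
  have ht : IsShuffle p q y.1.1 := y.1.2
  have h0 : 0 < (y.2 : ℕ) := y.2.2.1
  have h1 : (y.2 : ℕ) < p + q := y.2.2.2.1
  have hke' : (y.2 : ℕ) =
      Function.update y.1.1 l.castSucc (y.1.1 l.castSucc + 1) k.succ + (k : ℕ) := by
    rw [← hG1, ← hG2]; exact hke
  obtain ⟨k0, hk0v, hk0e, hk0l⟩ := Gmem_strong ht h0 hle hll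
  have hssh := Gshuffle ht h0 hle hll
  have hkk0 : k = k0 := uniqL hssh hke' hk0e
  subst hkk0
  apply NSig_ext
  · rw [hF1, hG1]
    have hcs : k.succ = l.castSucc := Fin.ext (by simp [hk0v])
    rw [hcs]
    have hv : Function.update y.1.1 l.castSucc (y.1.1 l.castSucc + 1) l.castSucc =
        y.1.1 l.castSucc + 1 := Function.update_self _ _ _
    rw [hv]
    have h2 : y.1.1 l.castSucc + 1 - 1 = y.1.1 l.castSucc := by omega
    rw [h2, Function.update_idem, Function.update_eq_self]
  · rw [hF2, hG2]

/-- The map `(i, s) ↦ (i, α_i(s))`, where `α_i(s)` replaces the entry `s_k` with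
`s_k - 1` at the index `k` with `i = s_k + k - 1`, is a bijection
`⨿_s s(⌐) × {s} → ⨿_s s(¬) × {s}`. -/
theorem flip_bijection (p q : ℕ) :
    ∃ F : LSig p q → NSig p q, Function.Bijective F ∧
      ∀ x : LSig p q, ((F x).2 : ℕ) = (x.2 : ℕ) ∧
        ∀ k : Fin (q + 1),
          ((x.2 : ℕ) = x.1.1 k.succ + (k : ℕ) ∧ x.1.1 k.castSucc < x.1.1 k.succ) →
          (F x).1.1 = Function.update x.1.1 k.succ (x.1.1 k.succ - 1) := by
  refine ⟨Fmap p q, Function.bijective_iff_has_inverse.mpr ⟨Gmap p q, GF, FG⟩, ?_⟩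
  intro x
  obtain ⟨k0, ⟨hke, hkl⟩, hF1, hF2⟩ := Fmap_spec x
  refine ⟨hF2, fun k hk => ?_⟩
  have hkk0 : k = k0 := uniqL x.1.2 hk.1 hke
  rw [hkk0]
  exact hF1
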